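/- arXiv:1105.2153 — 2 statements merged into one kernel-verified Lean document; each statement's English description precedes it below -/
import Mathlib

section
/- Power of a point in hyperbolic geometry is well-defined: for a point A and a circle ω in the hyperbolic plane, the product d_E(A,B)·d_E(A,C) of pseudolengths, where BC is any chord of ω passing through A, does not depend on the choice of the chord. -/
/-- The inverse hyperbolic cosine. -/
noncomputable def arcosh (x : ℝ) : ℝ := Real.log (x + Real.sqrt (x ^ 2 - 1))

/-- Hyperbolic distance between two points of the Poincaré disk (viewed inside `ℂ`). -/
noncomputable def dH (a b : ℂ) : ℝ :=
  arcosh (1 + 2 * ‖a - b‖ ^ 2 /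
    ((1 - ‖a‖ ^ 2) * (1 - ‖b‖ ^ 2)))

/-- Membership in the open unit (Poincaré) disk. -/
def inDisk (a : ℂ) : Prop := ‖a‖ < 1

/-- The (unsigned) hyperbolic angle at `y` of the triangle `x y z`,
defined via the hyperbolic law of cosines. -/
noncomputable def hAngle (x y z : ℂ) : ℝ :=
  Real.arccos ((Real.cosh (dH y x) * Real.cosh (dH y z) - Real.cosh (dH x z)) /
    (Real.sinh (dH y x) * Real.sinh (dH y z)))

/-- The hyperbolic area (angular defect) of triangle `a b c`. -/
noncomputable def hArea (a b c : ℂ) : ℝ :=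
  Real.pi - hAngle b a c - hAngle a b c - hAngle a c b

/-- `hSigma x y z = ∠xyz − ∠zxy − ∠yzx`: the angle of triangle `x y z` at `y`
minus its angles at `x` and at `z`. -/
noncomputable def hSigma (x y z : ℂ) : ℝ :=
  hAngle x y z - hAngle z x y - hAngle y z x

/-- `x` lies on the hyperbolic segment from `a` to `b`. -/
def onSeg (a x b : ℂ) : Prop := dH a x + dH x b = dH a b

/-- `x` lies strictly between `a` and `b`. -/
def sbtwH (a x b : ℂ) : Prop := onSeg a x b ∧ x ≠ a ∧ x ≠ b

/-- `x` lies on the hyperbolic line (geodesic) through `a` and `b`. -/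
def onLine (a b x : ℂ) : Prop := onSeg a x b ∨ onSeg a b x ∨ onSeg x a b

/-- Four points lie on a common hyperbolic circle. -/
def hConcyclic (a b c d : ℂ) : Prop :=
  ∃ o : ℂ, ∃ r : ℝ, inDisk o ∧ 0 < r ∧ dH o a = r ∧ dH o b = r ∧ dH o c = r ∧ dH o d = r

/-- `p` and `q` lie strictly on the same side of the line through `a`, `b`. -/
def hSameSide (a b p q : ℂ) : Prop :=
  ¬ onLine a b p ∧ ¬ onLine a b q ∧ ∀ x, onSeg p x q → ¬ onLine a b x

/-- `p` and `q` lie strictly on opposite sides of the line through `a`, `b`. -/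
def hOppSide (a b p q : ℂ) : Prop :=
  ¬ onLine a b p ∧ ¬ onLine a b q ∧ ∃ x, onSeg p x q ∧ onLine a b x

/-- The pseudolength of the segment `a b`: the Euclidean length of its image
after an isometry taking `a` to the center of the Poincaré disk. -/
noncomputable def dE (a b : ℂ) : ℝ := Real.tanh (dH a b / 2)

/-- The (signed) power of the point `a` with respect to the hyperbolic circle of
center `o` and radius `r`, in the pseudolength sense. -/
noncomputable def hPow (a o : ℂ) (r : ℝ) : ℝ :=
  Real.tanh ((dH a o - r) / 2) * Real.tanh ((dH a o + r) / 2)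

/-- The hyperbolic circle of center `o`, radius `r` is tangent at `p` to the line `a b`. -/
def hTangentAt (o : ℂ) (r : ℝ) (a b p : ℂ) : Prop :=
  onLine a b p ∧ dH o p = r ∧ ∀ q, onLine a b q → r ≤ dH o q

/-- Two hyperbolic circles are tangent: they meet in exactly one point. -/
def hTangentCircles (o : ℂ) (r : ℝ) (o' : ℂ) (r' : ℝ) : Prop :=
  ∃! p : ℂ, dH o p = r ∧ dH o' p = r'


open Complex Real

lemma key_identity (a b : ℂ) :
    ‖1 - (starRingEnd ℂ) a * b‖ ^ 2
      = (1 - ‖a‖ ^ 2) * (1 - ‖b‖ ^ 2) + ‖a - b‖ ^ 2 := by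
  simp only [Complex.sq_norm, Complex.normSq_apply, Complex.sub_re, Complex.sub_im, Complex.one_re,
    Complex.one_im, Complex.mul_re, Complex.mul_im, Complex.conj_re, Complex.conj_im]
  ring

lemma one_sub_conj_mul_ne_zero {a b : ℂ} (ha : ‖a‖ < 1) (hb : ‖b‖ < 1) :
    (1 : ℂ) - (starRingEnd ℂ) a * b ≠ 0 := by
  intro h
  have h1 : ‖(starRingEnd ℂ) a * b‖ < 1 := by
    rw [norm_mul, Complex.norm_conj]
    nlinarith [norm_nonneg a, norm_nonneg b]
  have h2 : (starRingEnd ℂ) a * b = 1 := by linear_combination -h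
  rw [h2] at h1; simp at h1

lemma tanh_half_log {y : ℝ} (hy : 0 < y) :
    Real.tanh (Real.log y / 2) = (y - 1) / (y + 1) := by
  rw [Real.tanh_eq_sinh_div_cosh, Real.sinh_eq, Real.cosh_eq]
  set u := Real.exp (Real.log y / 2) with hu
  have hu0 : 0 < u := Real.exp_pos _
  have huu : u * u = y := by
    rw [hu, ← Real.exp_add]
    rw [show Real.log y / 2 + Real.log y / 2 = Real.log y by ring, Real.exp_log hy]
  have hinv : Real.exp (-(Real.log y / 2)) = 1 / u := by rw [Real.exp_neg, one_div, hu]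
  rw [hinv]
  have h1 : u + 1 / u > 0 := by positivity
  have h2 : (0:ℝ) < y + 1 := by linarith
  rw [div_eq_div_iff (by positivity) (by positivity)]
  field_simp
  nlinarith [huu]

lemma sq_lt_one_of_inDisk {a : ℂ} (ha : inDisk a) : ‖a‖ ^ 2 < 1 := by
  have := norm_nonneg a
  unfold inDisk at ha
  nlinarith

lemma dE_eq {a b : ℂ} (ha : inDisk a) (hb : inDisk b) :
    dE a b = ‖a - b‖ / ‖1 - (starRingEnd ℂ) a * b‖ := by
  have ha2 := sq_lt_one_of_inDisk ha
  have hb2 := sq_lt_one_of_inDisk hb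
  set p := ‖a - b‖ with hp
  set q := ‖1 - (starRingEnd ℂ) a * b‖ with hqdef
  have hp0 : 0 ≤ p := norm_nonneg _
  have hq0 : 0 < q := by
    rw [hqdef]
    exact norm_pos_iff.mpr (one_sub_conj_mul_ne_zero ha hb)
  set D := (1 - ‖a‖ ^ 2) * (1 - ‖b‖ ^ 2) with hD
  have hDpos : 0 < D := by rw [hD]; nlinarith
  have hF : q ^ 2 = D + p ^ 2 := key_identity a b
  set X := 1 + 2 * p ^ 2 / D with hX
  have hXm : X - 1 = 2 * p ^ 2 / D := by rw [hX]; ring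
  have hXp : X + 1 = 2 * q ^ 2 / D := by
    rw [hX, hF]; field_simp; ring
  have hs : Real.sqrt (X ^ 2 - 1) = 2 * p * q / D := by
    have : X ^ 2 - 1 = (2 * p * q / D) ^ 2 := by
      have : X ^ 2 - 1 = (X - 1) * (X + 1) := by ring
      rw [this, hXm, hXp]; field_simp
    rw [this]
    exact Real.sqrt_sq (by positivity)
  have hX1 : 1 ≤ X := by
    rw [hX]
    have : 0 ≤ 2 * p ^ 2 / D := by positivity
    linarith
  have hy : 0 < X + Real.sqrt (X ^ 2 - 1) := by
    have := Real.sqrt_nonneg (X ^ 2 - 1)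
    linarith
  clear_value p q D X
  unfold dE dH _root_.arcosh
  rw [show (1 : ℝ) + 2 * ‖a - b‖ ^ 2 /
      ((1 - ‖a‖ ^ 2) * (1 - ‖b‖ ^ 2)) = X by rw [hX, hp, hD]]
  rw [tanh_half_log hy, hs]
  have hden : 0 < X + 2 * p * q / D + 1 := by
    have h9 : 0 ≤ 2 * p * q / D := by positivity
    nlinarith [hX1, h9]
  rw [div_eq_div_iff (ne_of_gt hden) (ne_of_gt hq0)]
  have h1 : X + 2 * p * q / D - 1 = 2 * p * (p + q) / D := by
    rw [show X + 2*p*q/D - 1 = (X - 1) + 2*p*q/D by ring, hXm]; field_simp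
  have h2 : X + 2 * p * q / D + 1 = 2 * q * (q + p) / D := by
    rw [show X + 2*p*q/D + 1 = (X + 1) + 2*p*q/D by ring, hXp]; field_simp
  rw [h1, h2]
  field_simp
  ring

noncomputable def moeb (A z : ℂ) : ℂ := (z - A) / (1 - (starRingEnd ℂ) A * z)

lemma moeb_self (A : ℂ) : moeb A A = 0 := by simp [moeb]

lemma moeb_abs_sq {A z : ℂ} (hA : inDisk A) (hz : inDisk z) :
    1 - ‖moeb A z‖ ^ 2
      = (1 - ‖A‖ ^ 2) * (1 - ‖z‖ ^ 2)
        / ‖1 - (starRingEnd ℂ) A * z‖ ^ 2 := by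
  have hne := one_sub_conj_mul_ne_zero hA hz
  have hq : 0 < ‖1 - (starRingEnd ℂ) A * z‖ := norm_pos_iff.mpr hne
  have key := key_identity A z
  unfold moeb
  rw [norm_div, div_pow]
  rw [norm_sub_rev z A]
  rw [eq_div_iff (pow_pos hq 2).ne', sub_mul, div_mul_cancel₀ _ (pow_pos hq 2).ne']
  linear_combination key

lemma moeb_inDisk {A z : ℂ} (hA : inDisk A) (hz : inDisk z) : inDisk (moeb A z) := by
  have h := moeb_abs_sq hA hz
  have hA2 := sq_lt_one_of_inDisk hA
  have hz2 := sq_lt_one_of_inDisk hz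
  have hq : 0 < ‖1 - (starRingEnd ℂ) A * z‖ ^ 2 :=
    pow_pos (norm_pos_iff.mpr (one_sub_conj_mul_ne_zero hA hz)) 2
  have hpos : 0 < (1 - ‖A‖ ^ 2) * (1 - ‖z‖ ^ 2)
      / ‖1 - (starRingEnd ℂ) A * z‖ ^ 2 := by
    apply div_pos (by nlinarith) hq
  have h2 : ‖moeb A z‖ ^ 2 < 1 := by linarith
  have := norm_nonneg (moeb A z)
  unfold inDisk
  nlinarith

lemma abs_one_sub_conj_self {A : ℂ} (hA : inDisk A) :
    ‖1 - (starRingEnd ℂ) A * A‖ = 1 - ‖A‖ ^ 2 := by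
  have : (starRingEnd ℂ) A * A = ((‖A‖ ^ 2 : ℝ) : ℂ) := by
    rw [mul_comm, Complex.mul_conj, Complex.sq_norm]
  rw [this, show (1 : ℂ) - ((‖A‖ ^ 2 : ℝ) : ℂ) = (((1 - ‖A‖ ^ 2 : ℝ)) : ℂ) by
    push_cast; ring]
  rw [Complex.norm_real, Real.norm_eq_abs]
  exact abs_of_pos (by linarith [sq_lt_one_of_inDisk hA])

lemma moeb_sub_abs {A z w : ℂ} (hA : inDisk A) (hz : inDisk z) (hw : inDisk w) :
    ‖moeb A z - moeb A w‖
      = ‖z - w‖ * (1 - ‖A‖ ^ 2)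
        / (‖1 - (starRingEnd ℂ) A * z‖ * ‖1 - (starRingEnd ℂ) A * w‖) := by
  have hz' := one_sub_conj_mul_ne_zero hA hz
  have hw' := one_sub_conj_mul_ne_zero hA hw
  have hid : moeb A z - moeb A w
      = (z - w) * (1 - (starRingEnd ℂ) A * A)
        / ((1 - (starRingEnd ℂ) A * z) * (1 - (starRingEnd ℂ) A * w)) := by
    unfold moeb
    rw [div_sub_div _ _ hz' hw']; congr 1; ring
  rw [hid, norm_div, norm_mul, norm_mul, abs_one_sub_conj_self hA]

lemma dH_moeb {A z w : ℂ} (hA : inDisk A) (hz : inDisk z) (hw : inDisk w) :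
    dH (moeb A z) (moeb A w) = dH z w := by
  have hz' : (0:ℝ) < ‖1 - (starRingEnd ℂ) A * z‖ :=
    norm_pos_iff.mpr (one_sub_conj_mul_ne_zero hA hz)
  have hw' : (0:ℝ) < ‖1 - (starRingEnd ℂ) A * w‖ :=
    norm_pos_iff.mpr (one_sub_conj_mul_ne_zero hA hw)
  have hA2 := sq_lt_one_of_inDisk hA
  have hz2 := sq_lt_one_of_inDisk hz
  have hw2 := sq_lt_one_of_inDisk hw
  unfold dH
  congr 1
  rw [moeb_sub_abs hA hz hw, moeb_abs_sq hA hz, moeb_abs_sq hA hw]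
  have n1 : (1:ℝ) - ‖A‖ ^ 2 ≠ 0 := by nlinarith [sq_lt_one_of_inDisk hA]
  have n2 : (1:ℝ) - ‖z‖ ^ 2 ≠ 0 := by nlinarith
  have n3 : (1:ℝ) - ‖w‖ ^ 2 ≠ 0 := by nlinarith
  have n4 : ‖1 - z * (starRingEnd ℂ) A‖ ≠ 0 := by rw [mul_comm]; exact hz'.ne'
  have n5 : ‖1 - w * (starRingEnd ℂ) A‖ ≠ 0 := by rw [mul_comm]; exact hw'.ne'
  field_simp

lemma moeb_inj {A z w : ℂ} (hA : inDisk A) (hz : inDisk z) (hw : inDisk w)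
    (h : moeb A z = moeb A w) : z = w := by
  have hz' := one_sub_conj_mul_ne_zero hA hz
  have hw' := one_sub_conj_mul_ne_zero hA hw
  unfold moeb at h
  rw [div_eq_div_iff hz' hw'] at h
  have h2 : (z - w) * (1 - (starRingEnd ℂ) A * A) = 0 := by linear_combination h
  rcases mul_eq_zero.1 h2 with h1 | h1
  · have := sub_eq_zero.mp h1; exact this
  · exact absurd h1 (one_sub_conj_mul_ne_zero hA hA)

lemma tanh_add_mul (x y : ℝ) :
    Real.tanh (x + y) * (1 + Real.tanh x * Real.tanh y) = Real.tanh x + Real.tanh y := by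
  have hx := Real.cosh_pos x
  have hy := Real.cosh_pos y
  have hxy : 0 < Real.cosh x * Real.cosh y + Real.sinh x * Real.sinh y := by
    rw [← Real.cosh_add]; exact Real.cosh_pos _
  rw [Real.tanh_eq_sinh_div_cosh, Real.tanh_eq_sinh_div_cosh, Real.tanh_eq_sinh_div_cosh,
    Real.sinh_add, Real.cosh_add]
  rw [div_mul_eq_mul_div, div_eq_iff hxy.ne']
  field_simp

lemma zero_inDisk : inDisk 0 := by simp [inDisk]

lemma dE_zero_right {b : ℂ} (hb : inDisk b) : dE b 0 = ‖b‖ := by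
  rw [dE_eq hb zero_inDisk]; simp

lemma dE_zero_left {b : ℂ} (hb : inDisk b) : dE 0 b = ‖b‖ := by
  rw [dE_eq zero_inDisk hb]; simp

lemma abs_sub_sq_expand (b c : ℂ) :
    ‖b - c‖ ^ 2
      = ‖b‖ ^ 2 + ‖c‖ ^ 2 - 2 * ((starRingEnd ℂ) b * c).re := by
  simp only [Complex.sq_norm, Complex.normSq_apply, Complex.sub_re, Complex.sub_im,
    Complex.mul_re, Complex.mul_im, Complex.conj_re, Complex.conj_im]
  ring

lemma abs_one_sub_sq_expand (b c : ℂ) :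
    ‖1 - (starRingEnd ℂ) b * c‖ ^ 2
      = 1 - 2 * ((starRingEnd ℂ) b * c).re
        + (((starRingEnd ℂ) b * c).re ^ 2 + ((starRingEnd ℂ) b * c).im ^ 2) := by
  simp only [Complex.sq_norm, Complex.normSq_apply, Complex.sub_re, Complex.sub_im,
    Complex.mul_re, Complex.mul_im, Complex.conj_re, Complex.conj_im, Complex.one_re,
    Complex.one_im]
  ring

lemma re_im_sq_expand (b c : ℂ) :
    ((starRingEnd ℂ) b * c).re ^ 2 + ((starRingEnd ℂ) b * c).im ^ 2
      = ‖b‖ ^ 2 * ‖c‖ ^ 2 := by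
  simp only [Complex.sq_norm, Complex.normSq_apply, Complex.mul_re, Complex.mul_im,
    Complex.conj_re, Complex.conj_im]
  ring

lemma im_eq_zero_of_onLine {b c : ℂ} (hb : inDisk b) (hc : inDisk c) (h : onLine b c 0) :
    ((starRingEnd ℂ) b * c).im = 0 := by
  set β := ‖b‖ with hβ
  set γ := ‖c‖ with hγ
  set R := ((starRingEnd ℂ) b * c).re with hR
  set I := ((starRingEnd ℂ) b * c).im with hI
  set A := ‖b - c‖ with hA
  set q := ‖1 - (starRingEnd ℂ) b * c‖ with hq
  have hn : R ^ 2 + I ^ 2 = β ^ 2 * γ ^ 2 := re_im_sq_expand b c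
  have hE : A ^ 2 = β ^ 2 + γ ^ 2 - 2 * R := abs_sub_sq_expand b c
  have hq2 : q ^ 2 = 1 - 2 * R + (R ^ 2 + I ^ 2) := abs_one_sub_sq_expand b c
  have hb2 := sq_lt_one_of_inDisk hb
  have hc2 := sq_lt_one_of_inDisk hc
  have hq0 : 0 < q := norm_pos_iff.mpr (one_sub_conj_mul_ne_zero hb hc)
  have hT : dE b c = A / q := dE_eq hb hc
  have key : (R + β * γ) * ((1 - β ^ 2) * (1 - γ ^ 2)) = 0 ∨
      (R - β * γ) * ((1 - β ^ 2) * (1 - γ ^ 2)) = 0 := by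
    rcases h with h1 | h1 | h1
    · -- dH b 0 + dH 0 c = dH b c
      left
      have e1 : dE b c * (1 + dE b 0 * dE 0 c) = dE b 0 + dE 0 c := by
        unfold onSeg at h1
        unfold dE
        rw [← h1, show (dH b 0 + dH 0 c) / 2 = dH b 0 / 2 + dH 0 c / 2 by ring]
        exact tanh_add_mul _ _
      rw [dE_zero_right hb, dE_zero_left hc, hT] at e1
      have e2 : A * (1 + β * γ) = (β + γ) * q := by
        field_simp at e1
        linear_combination e1
      have e3 : (A * (1 + β * γ)) ^ 2 = ((β + γ) * q) ^ 2 := by rw [e2]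
      linear_combination (-1/2 : ℝ) * e3 + ((1 + β * γ) ^ 2 / 2) * hE
        - ((β + γ) ^ 2 / 2) * hq2 - ((β + γ) ^ 2 / 2) * hn
    · -- dH b c + dH c 0 = dH b 0
      right
      have e1 : dE b 0 * (1 + dE b c * dE c 0) = dE b c + dE c 0 := by
        unfold onSeg at h1
        unfold dE
        rw [← h1, show (dH b c + dH c 0) / 2 = dH b c / 2 + dH c 0 / 2 by ring]
        exact tanh_add_mul _ _
      rw [dE_zero_right hb, dE_zero_right hc, hT] at e1
      have e2 : (β - γ) * q = (1 - β * γ) * A := by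
        field_simp at e1
        linear_combination e1
      have e3 : ((β - γ) * q) ^ 2 = ((1 - β * γ) * A) ^ 2 := by rw [e2]
      linear_combination (1/2 : ℝ) * e3 + ((1 - β * γ) ^ 2 / 2) * hE
        - ((β - γ) ^ 2 / 2) * hq2 - ((β - γ) ^ 2 / 2) * hn
    · -- dH 0 b + dH b c = dH 0 c
      right
      have e1 : dE 0 c * (1 + dE 0 b * dE b c) = dE 0 b + dE b c := by
        unfold onSeg at h1
        unfold dE
        rw [← h1, show (dH 0 b + dH b c) / 2 = dH 0 b / 2 + dH b c / 2 by ring]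
        exact tanh_add_mul _ _
      rw [dE_zero_left hb, dE_zero_left hc, hT] at e1
      have e2 : (γ - β) * q = (1 - β * γ) * A := by
        field_simp at e1
        linear_combination e1
      have e3 : ((γ - β) * q) ^ 2 = ((1 - β * γ) * A) ^ 2 := by rw [e2]
      linear_combination (1/2 : ℝ) * e3 + ((1 - β * γ) ^ 2 / 2) * hE
        - ((γ - β) ^ 2 / 2) * hq2 - ((γ - β) ^ 2 / 2) * hn
  have hpos : 0 < (1 - β ^ 2) * (1 - γ ^ 2) := by nlinarith
  have hI2 : I ^ 2 = 0 := by
    rcases key with k | k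
    · have hRv : R = -(β * γ) := by
        rcases mul_eq_zero.1 k with k1 | k1
        · linarith
        · exact absurd k1 (ne_of_gt hpos)
      nlinarith [hn, hRv]
    · have hRv : R = β * γ := by
        rcases mul_eq_zero.1 k with k1 | k1
        · linarith
        · exact absurd k1 (ne_of_gt hpos)
      nlinarith [hn, hRv]
  exact pow_eq_zero_iff (by norm_num) |>.1 hI2

lemma conj_mul_re_comm (z w : ℂ) :
    ((starRingEnd ℂ) z * w).re = ((starRingEnd ℂ) w * z).re := by
  simp only [Complex.mul_re, Complex.conj_re, Complex.conj_im]
  ring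

lemma circle_quad {o b : ℂ} {t : ℝ}
    (hb : ‖b - o‖ = t * ‖1 - (starRingEnd ℂ) o * b‖) :
    ‖b‖ ^ 2 * (1 - t ^ 2 * ‖o‖ ^ 2)
      - 2 * ((starRingEnd ℂ) o * b).re * (1 - t ^ 2)
      + (‖o‖ ^ 2 - t ^ 2) = 0 := by
  have eb2 : ‖b - o‖ ^ 2 = t ^ 2 * ‖1 - (starRingEnd ℂ) o * b‖ ^ 2 := by
    rw [hb]; ring
  have hsub_b : ‖b - o‖ ^ 2
      = ‖b‖ ^ 2 + ‖o‖ ^ 2 - 2 * ((starRingEnd ℂ) o * b).re := by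
    rw [abs_sub_sq_expand b o, conj_mul_re_comm b o]
  have hone_b : ‖1 - (starRingEnd ℂ) o * b‖ ^ 2
      = 1 - 2 * ((starRingEnd ℂ) o * b).re + ‖o‖ ^ 2 * ‖b‖ ^ 2 := by
    rw [abs_one_sub_sq_expand o b, re_im_sq_expand o b]
  linear_combination eb2 - hsub_b + t ^ 2 * hone_b

lemma euclid_pow {o b c : ℂ} {t : ℝ} (ht0 : 0 < t) (ht1 : t < 1) (ho : inDisk o)
    (hb : ‖b - o‖ = t * ‖1 - (starRingEnd ℂ) o * b‖)
    (hc : ‖c - o‖ = t * ‖1 - (starRingEnd ℂ) o * c‖)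
    (hbc : b ≠ c) (him : ((starRingEnd ℂ) b * c).im = 0) :
    ‖b‖ * ‖c‖
      = |‖o‖ ^ 2 - t ^ 2| / (1 - t ^ 2 * ‖o‖ ^ 2) := by
  have ho2 := sq_lt_one_of_inDisk ho
  have hden : 0 < 1 - t ^ 2 * ‖o‖ ^ 2 := by nlinarith [sq_nonneg (‖o‖)]
  by_cases hb0 : b = 0
  · subst hb0
    simp only [zero_sub, norm_neg, mul_zero, sub_zero, norm_one, mul_one] at hb
    have : ‖o‖ ^ 2 - t ^ 2 = 0 := by rw [hb]; ring
    rw [this]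
    simp
  by_cases hc0 : c = 0
  · subst hc0
    simp only [zero_sub, norm_neg, mul_zero, sub_zero, norm_one, mul_one] at hc
    have : ‖o‖ ^ 2 - t ^ 2 = 0 := by rw [hc]; ring
    rw [this]
    simp
  set β := ‖b‖ with hβ
  set s := ‖o‖ ^ 2 with hs
  set R := ((starRingEnd ℂ) b * c).re with hR
  have hβpos : 0 < β := norm_pos_iff.mpr hb0
  have hβ2 : (0:ℝ) < β ^ 2 := by positivity
  have h1 : (starRingEnd ℂ) b * c = ((R : ℝ) : ℂ) := by
    apply Complex.ext
    · simp [hR]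
    · simp [him]
  set l : ℝ := R / β ^ 2 with hl
  have hbb : b * (starRingEnd ℂ) b = ((β ^ 2 : ℝ) : ℂ) := by
    rw [Complex.mul_conj]
    norm_cast
    rw [hβ, Complex.sq_norm]
  have h2 : ((β ^ 2 : ℝ) : ℂ) * c = ((R : ℝ) : ℂ) * b := by
    calc ((β ^ 2 : ℝ) : ℂ) * c = (b * (starRingEnd ℂ) b) * c := by rw [hbb]
    _ = b * ((starRingEnd ℂ) b * c) := by ring
    _ = b * ((R : ℝ) : ℂ) := by rw [h1]
    _ = ((R : ℝ) : ℂ) * b := by ring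
  have hβ2c : ((β ^ 2 : ℝ) : ℂ) ≠ 0 := by
    simpa using hβ2.ne'
  have hc_eq : c = ((l : ℝ) : ℂ) * b := by
    rw [hl, Complex.ofReal_div, div_mul_eq_mul_div, eq_div_iff hβ2c]
    linear_combination h2
  clear_value l
  set m := ((starRingEnd ℂ) o * b).re with hm
  have e1 := circle_quad hb
  have e1c := circle_quad hc
  have hmc : ((starRingEnd ℂ) o * c).re = l * m := by
    rw [hc_eq, show (starRingEnd ℂ) o * (((l : ℝ) : ℂ) * b) = ((l : ℝ) : ℂ) * ((starRingEnd ℂ) o * b) by ring]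
    simp [Complex.mul_re, hm]
  have habsc : ‖c‖ = |l| * β := by
    rw [hc_eq, norm_mul, Complex.norm_real, Real.norm_eq_abs, hβ]
  have hγ2 : ‖c‖ ^ 2 = l ^ 2 * β ^ 2 := by
    rw [habsc, mul_pow, _root_.sq_abs]
  have e2 : l ^ 2 * β ^ 2 * (1 - t ^ 2 * s) - 2 * (l * m) * (1 - t ^ 2) + (s - t ^ 2) = 0 := by
    rw [← hγ2, ← hmc]
    exact e1c
  have hlne : l ≠ 1 := by
    intro h
    apply hbc
    rw [hc_eq, h]
    simp
  have hfac : (1 - l) * ((1 + l) * β ^ 2 * (1 - t ^ 2 * s) - 2 * m * (1 - t ^ 2)) = 0 := by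
    linear_combination e1 - e2
  have hsum : (1 + l) * β ^ 2 * (1 - t ^ 2 * s) - 2 * m * (1 - t ^ 2) = 0 := by
    rcases mul_eq_zero.1 hfac with k | k
    · exact absurd (by linarith : l = 1) hlne
    · exact k
  have hval : s - t ^ 2 = l * β ^ 2 * (1 - t ^ 2 * s) := by
    linear_combination e1 - hsum
  rw [habsc, hval, eq_div_iff hden.ne']
  rw [abs_mul (l * β ^ 2) (1 - t ^ 2 * s), abs_mul l (β ^ 2),
    _root_.abs_of_nonneg (sq_nonneg β), _root_.abs_of_pos hden]
  ring

lemma dE_abs_moeb {A z : ℂ} (hA : inDisk A) (hz : inDisk z) :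
    dE A z = ‖moeb A z‖ := by
  rw [dE_eq hA hz]
  unfold moeb
  rw [norm_div, norm_sub_rev z A]

lemma tanh_mem_Ioo {r : ℝ} (hr : 0 < r) : 0 < Real.tanh (r / 2) ∧ Real.tanh (r / 2) < 1 := by
  have hc := Real.cosh_pos (r / 2)
  have hs : 0 < Real.sinh (r / 2) := by
    rw [Real.sinh_eq]
    have := Real.exp_lt_exp.2 (show -(r / 2) < r / 2 by linarith)
    linarith
  have hcs : Real.sinh (r / 2) < Real.cosh (r / 2) := Real.sinh_lt_cosh _
  constructor
  · rw [Real.tanh_eq_sinh_div_cosh]; exact div_pos hs hc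
  · rw [Real.tanh_eq_sinh_div_cosh]; exact (div_lt_one hc).2 hcs

lemma circle_transfer {A o z : ℂ} {r : ℝ} (hA : inDisk A) (ho : inDisk o) (hz : inDisk z)
    (h : dH o z = r) :
    ‖moeb A z - moeb A o‖
      = Real.tanh (r / 2) * ‖1 - (starRingEnd ℂ) (moeb A o) * moeb A z‖ := by
  have ho₁ := moeb_inDisk hA ho
  have hz₁ := moeb_inDisk hA hz
  have e : dE (moeb A o) (moeb A z) = Real.tanh (r / 2) := by
    unfold dE
    rw [dH_moeb hA ho hz, h]
  rw [dE_eq ho₁ hz₁] at e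
  have hq : ‖1 - (starRingEnd ℂ) (moeb A o) * moeb A z‖ ≠ 0 :=
    (norm_pos_iff.mpr (one_sub_conj_mul_ne_zero ho₁ hz₁)).ne'
  rw [div_eq_iff hq] at e
  rw [norm_sub_rev, e]

/-- The power of a point in hyperbolic geometry is well defined: if `BC` and
`B'C'` are two chords of the circle of center `o`, radius `r`, both passing
through the point `A`, then `d_E(A,B)·d_E(A,C) = d_E(A,B')·d_E(A,C')`. -/
theorem power_of_point_well_defined (A o B C B' C' : ℂ) (r : ℝ)
    (hA : inDisk A) (ho : inDisk o)
    (hB : inDisk B) (hC : inDisk C) (hB' : inDisk B') (hC' : inDisk C')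
    (hr : 0 < r)
    (hBc : dH o B = r) (hCc : dH o C = r) (hB'c : dH o B' = r) (hC'c : dH o C' = r)
    (hBC : B ≠ C) (hB'C' : B' ≠ C')
    (h1 : onLine B C A) (h2 : onLine B' C' A) :
    dE A B * dE A C = dE A B' * dE A C' := by
  obtain ⟨ht0, ht1⟩ := tanh_mem_Ioo hr
  have ho₁ := moeb_inDisk hA ho
  have hB₁ := moeb_inDisk hA hB
  have hC₁ := moeb_inDisk hA hC
  have hB'₁ := moeb_inDisk hA hB'
  have hC'₁ := moeb_inDisk hA hC'
  have honline : onLine (moeb A B) (moeb A C) 0 := by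
    rcases h1 with h | h | h
    · left
      show dH (moeb A B) 0 + dH 0 (moeb A C) = dH (moeb A B) (moeb A C)
      rw [show (0:ℂ) = moeb A A from (moeb_self A).symm,
        dH_moeb hA hB hA, dH_moeb hA hA hC, dH_moeb hA hB hC]
      exact h
    · right; left
      show dH (moeb A B) (moeb A C) + dH (moeb A C) 0 = dH (moeb A B) 0
      rw [show (0:ℂ) = moeb A A from (moeb_self A).symm,
        dH_moeb hA hB hC, dH_moeb hA hC hA, dH_moeb hA hB hA]
      exact h
    · right; right
      show dH 0 (moeb A B) + dH (moeb A B) (moeb A C) = dH 0 (moeb A C)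
      rw [show (0:ℂ) = moeb A A from (moeb_self A).symm,
        dH_moeb hA hA hB, dH_moeb hA hB hC, dH_moeb hA hA hC]
      exact h
  have honline' : onLine (moeb A B') (moeb A C') 0 := by
    rcases h2 with h | h | h
    · left
      show dH (moeb A B') 0 + dH 0 (moeb A C') = dH (moeb A B') (moeb A C')
      rw [show (0:ℂ) = moeb A A from (moeb_self A).symm,
        dH_moeb hA hB' hA, dH_moeb hA hA hC', dH_moeb hA hB' hC']
      exact h
    · right; left
      show dH (moeb A B') (moeb A C') + dH (moeb A C') 0 = dH (moeb A B') 0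
      rw [show (0:ℂ) = moeb A A from (moeb_self A).symm,
        dH_moeb hA hB' hC', dH_moeb hA hC' hA, dH_moeb hA hB' hA]
      exact h
    · right; right
      show dH 0 (moeb A B') + dH (moeb A B') (moeb A C') = dH 0 (moeb A C')
      rw [show (0:ℂ) = moeb A A from (moeb_self A).symm,
        dH_moeb hA hA hB', dH_moeb hA hB' hC', dH_moeb hA hA hC']
      exact h
  have hne : moeb A B ≠ moeb A C := fun h => hBC (moeb_inj hA hB hC h)
  have hne' : moeb A B' ≠ moeb A C' := fun h => hB'C' (moeb_inj hA hB' hC' h)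
  have him := im_eq_zero_of_onLine hB₁ hC₁ honline
  have him' := im_eq_zero_of_onLine hB'₁ hC'₁ honline'
  have P1 := euclid_pow ht0 ht1 ho₁ (circle_transfer hA ho hB hBc)
    (circle_transfer hA ho hC hCc) hne him
  have P2 := euclid_pow ht0 ht1 ho₁ (circle_transfer hA ho hB' hB'c)
    (circle_transfer hA ho hC' hC'c) hne' him'
  rw [dE_abs_moeb hA hB, dE_abs_moeb hA hC, dE_abs_moeb hA hB', dE_abs_moeb hA hC']
  rw [P1, P2]
end

section
/- The three pseudoaltitudes of a hyperbolic triangle are concurrent: they meet at the radical center of the circles through (A,B,H_a,H_b), (A,C,H_a,H_c) and (B,C,H_b,H_c). -/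
set_option maxHeartbeats 1000000
namespace PAaux

lemma sqeq {x y : ℝ} (hx : 0 ≤ x) (hy : 0 ≤ y) (h : x ^ 2 = y ^ 2) : x = y := by
  rw [← Real.sqrt_sq hx, h, Real.sqrt_sq hy]

lemma cosh_arcosh {x : ℝ} (hx : 1 ≤ x) : Real.cosh (arcosh x) = x := by
  have h0 : (0:ℝ) ≤ x ^ 2 - 1 := by nlinarith
  have hs : Real.sqrt (x ^ 2 - 1) ^ 2 = x ^ 2 - 1 := Real.sq_sqrt h0
  have hsn : 0 ≤ Real.sqrt (x ^ 2 - 1) := Real.sqrt_nonneg _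
  have hy : 0 < x + Real.sqrt (x ^ 2 - 1) := by nlinarith
  unfold arcosh
  rw [Real.cosh_eq, Real.exp_log hy, Real.exp_neg, Real.exp_log hy]
  have hinv : (x + Real.sqrt (x ^ 2 - 1))⁻¹ = x - Real.sqrt (x ^ 2 - 1) := by
    rw [inv_eq_iff_eq_inv, eq_comm, inv_eq_iff_eq_inv] at *
    field_simp
    nlinarith
  rw [hinv]; ring

lemma arcosh_nonneg {x : ℝ} (hx : 1 ≤ x) : 0 ≤ arcosh x := by
  unfold arcosh
  apply Real.log_nonneg
  nlinarith [Real.sqrt_nonneg (x ^ 2 - 1)]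

lemma arcosh_pos {x : ℝ} (hx : 1 < x) : 0 < arcosh x := by
  unfold arcosh
  apply Real.log_pos
  nlinarith [Real.sqrt_nonneg (x ^ 2 - 1)]

lemma arcosh_nonpos {x : ℝ} (hx : x ≤ 1) : arcosh x ≤ 0 := by
  unfold arcosh
  rcases le_or_gt (-1) x with h1 | h1
  · have h0 : x ^ 2 - 1 ≤ 0 := by nlinarith
    have hs : Real.sqrt (x ^ 2 - 1) = 0 := Real.sqrt_eq_zero_of_nonpos h0
    rw [hs, add_zero]
    rcases le_or_gt 0 x with h2 | h2
    · exact Real.log_nonpos h2 hx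
    · rw [show x = -(-x) by ring, Real.log_neg_eq_log]
      exact Real.log_nonpos (by linarith) (by linarith)
  · have h0 : (0:ℝ) ≤ x ^ 2 - 1 := by nlinarith
    have hs : Real.sqrt (x ^ 2 - 1) ^ 2 = x ^ 2 - 1 := Real.sq_sqrt h0
    have hsn : 0 ≤ Real.sqrt (x ^ 2 - 1) := Real.sqrt_nonneg _
    have hlt : Real.sqrt (x ^ 2 - 1) < -x := by nlinarith
    have hy : x + Real.sqrt (x ^ 2 - 1) < 0 := by linarith
    rw [show x + Real.sqrt (x ^ 2 - 1) = -(-(x + Real.sqrt (x ^ 2 - 1))) by ring,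
      Real.log_neg_eq_log]
    apply Real.log_nonpos (by linarith)
    nlinarith

lemma cosh_inj {u v : ℝ} (hu : 0 ≤ u) (hv : 0 ≤ v) (h : Real.cosh u = Real.cosh v) : u = v := by
  have hs : Real.sinh u = Real.sinh v := by
    apply sqeq (Real.sinh_nonneg_iff.mpr hu) (Real.sinh_nonneg_iff.mpr hv)
    have h1 := Real.sinh_sq u
    have h2 := Real.sinh_sq v
    rw [h1, h2, h]
  have : Real.exp u = Real.exp v := by
    rw [← Real.cosh_add_sinh, ← Real.cosh_add_sinh, h, hs]
  exact Real.exp_injective this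

lemma one_lt_cosh_of_pos {x : ℝ} (hx : 0 < x) : 1 < Real.cosh x := by
  nlinarith [Real.sinh_sq x, Real.sinh_pos_iff.mpr hx, Real.cosh_pos x]


noncomputable def uT (a : ℂ) : ℝ := (1 + Complex.normSq a) / (1 - Complex.normSq a)
noncomputable def uX (a : ℂ) : ℝ := 2 * a.re / (1 - Complex.normSq a)
noncomputable def uY (a : ℂ) : ℝ := 2 * a.im / (1 - Complex.normSq a)
noncomputable def md (a b : ℂ) : ℝ := uX a * uX b + uY a * uY b - uT a * uT b

lemma normSq_lt_one {a : ℂ} (ha : inDisk a) : Complex.normSq a < 1 := by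
  have h1 := Complex.sq_norm a
  have h2 : ‖a‖ ^ 2 < 1 := by
    have h3 := norm_nonneg a
    have ha' : ‖a‖ < 1 := ha
    nlinarith [ha'.le, ha']
  linarith [h1 ▸ h2]

lemma nd_pos {a : ℂ} (ha : inDisk a) : 0 < 1 - Complex.normSq a := by
  linarith [normSq_lt_one ha]

lemma uT_pos {a : ℂ} (ha : inDisk a) : 0 < uT a := by
  unfold uT
  exact div_pos (by nlinarith [Complex.normSq_nonneg a]) (nd_pos ha)

lemma md_comm (a b : ℂ) : md a b = md b a := by unfold md; ring

lemma md_self {a : ℂ} (ha : inDisk a) : md a a = -1 := by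
  have h := nd_pos ha
  rw [Complex.normSq_apply] at h
  unfold md uT uX uY
  rw [Complex.normSq_apply]
  field_simp [show 1 - (a.re ^ 2 + a.im ^ 2) ≠ 0 by simpa only [sq] using h.ne']
  ring

lemma abs_sq_eq (a : ℂ) : ‖a‖ ^ 2 = a.re ^ 2 + a.im ^ 2 := by
  rw [Complex.sq_norm, Complex.normSq_apply]; ring

lemma arg_eq {a b : ℂ} (ha : inDisk a) (hb : inDisk b) :
    1 + 2 * ‖a - b‖ ^ 2 / ((1 - ‖a‖ ^ 2) * (1 - ‖b‖ ^ 2))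
      = - md a b := by
  have hda := (nd_pos ha).ne'
  have hdb := (nd_pos hb).ne'
  have h1a : 1 - ‖a‖ ^ 2 = 1 - Complex.normSq a := by rw [Complex.sq_norm]
  have h1b : 1 - ‖b‖ ^ 2 = 1 - Complex.normSq b := by rw [Complex.sq_norm]
  have h2 : ‖a - b‖ ^ 2
      = Complex.normSq a - 2 * (a.re * b.re + a.im * b.im) + Complex.normSq b := by
    rw [Complex.sq_norm]
    simp only [Complex.normSq_apply, Complex.sub_re, Complex.sub_im]
    ring
  rw [h1a, h1b, h2]
  unfold md uT uX uY
  simp only [Complex.normSq_apply] at *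
  field_simp [show 1 - (a.re ^ 2 + a.im ^ 2) ≠ 0 by simpa only [sq] using hda, show 1 - (b.re ^ 2 + b.im ^ 2) ≠ 0 by simpa only [sq] using hdb]
  ring

lemma one_le_neg_md {a b : ℂ} (ha : inDisk a) (hb : inDisk b) : 1 ≤ - md a b := by
  rw [← arg_eq ha hb]
  have pa : (0:ℝ) < 1 - ‖a‖ ^ 2 := by
    have ha' : ‖a‖ < 1 := ha
    have h3 := norm_nonneg a; nlinarith [ha', ha'.le]
  have pb : (0:ℝ) < 1 - ‖b‖ ^ 2 := by
    have hb' : ‖b‖ < 1 := hb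
    have h3 := norm_nonneg b; nlinarith [hb', hb'.le]
  have : 0 ≤ 2 * ‖a - b‖ ^ 2 / ((1 - ‖a‖ ^ 2) * (1 - ‖b‖ ^ 2)) :=
    div_nonneg (by positivity) (mul_pos pa pb).le
  linarith

lemma cosh_dH {a b : ℂ} (ha : inDisk a) (hb : inDisk b) :
    Real.cosh (dH a b) = - md a b := by
  unfold dH
  rw [arg_eq ha hb]
  exact cosh_arcosh (one_le_neg_md ha hb)

lemma dH_nonneg {a b : ℂ} (ha : inDisk a) (hb : inDisk b) : 0 ≤ dH a b := by
  unfold dH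
  rw [arg_eq ha hb]
  exact arcosh_nonneg (one_le_neg_md ha hb)

lemma md_le {a b : ℂ} (ha : inDisk a) (hb : inDisk b) : md a b ≤ -1 := by
  linarith [one_le_neg_md ha hb]

lemma dH_comm (a b : ℂ) : dH a b = dH b a := by
  unfold dH
  rw [norm_sub_rev, mul_comm (1 - ‖a‖ ^ 2)]

lemma dH_pos {a b : ℂ} (ha : inDisk a) (hb : inDisk b) (hne : a ≠ b) : 0 < dH a b := by
  unfold dH
  apply arcosh_pos
  have h1 : 0 < ‖a - b‖ := norm_pos_iff.mpr (sub_ne_zero.mpr hne)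
  have h2 : 0 < 1 - ‖a‖ ^ 2 := by
    have := ha; have h2 := norm_nonneg a; unfold inDisk at this; nlinarith
  have h3 : 0 < 1 - ‖b‖ ^ 2 := by
    have := hb; have h3 := norm_nonneg b; unfold inDisk at this; nlinarith
  have : 0 < 2 * ‖a - b‖ ^ 2 / ((1 - ‖a‖ ^ 2) * (1 - ‖b‖ ^ 2)) :=
    div_pos (by positivity) (by positivity)
  linarith

lemma dH_nonpos_outside {a b : ℂ} (ha : inDisk a) (hb : ¬ inDisk b) : dH a b ≤ 0 := by
  unfold dH
  apply arcosh_nonpos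
  have h2 : 0 < 1 - ‖a‖ ^ 2 := by
    have := ha; have h2 := norm_nonneg a; unfold inDisk at this; nlinarith
  have hb1 : 1 ≤ ‖b‖ := by unfold inDisk at hb; linarith [not_lt.mp hb]
  rcases eq_or_lt_of_le hb1 with h | h
  · have : (1 - ‖b‖ ^ 2) = 0 := by rw [← h]; ring
    rw [this, mul_zero, div_zero, add_zero]
  · have h3 : 1 - ‖b‖ ^ 2 < 0 := by nlinarith
    have : 2 * ‖a - b‖ ^ 2 / ((1 - ‖a‖ ^ 2) * (1 - ‖b‖ ^ 2)) ≤ 0 := by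
      apply div_nonpos_of_nonneg_of_nonpos (by positivity)
      nlinarith
    linarith

lemma dH_self (a : ℂ) : dH a a = 0 := by
  unfold dH arcosh
  simp


def comb (z : ℂ) (s : ℝ) (a : ℂ) (t : ℝ) (b : ℂ) : Prop :=
  uT z = s * uT a + t * uT b ∧ uX z = s * uX a + t * uX b ∧ uY z = s * uY a + t * uY b

lemma md_comb {z a b : ℂ} {s t : ℝ} (h : comb z s a t b) (w : ℂ) :
    md z w = s * md a w + t * md b w := by
  obtain ⟨h1, h2, h3⟩ := h
  unfold md
  rw [h1, h2, h3]; ring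

lemma md_vals {z a b : ℂ} {s t : ℝ} (ha : inDisk a) (hb : inDisk b) (hz : inDisk z)
    (h : comb z s a t b) :
    md a z = -(s + t * Real.cosh (dH a b)) ∧
    md b z = -(s * Real.cosh (dH a b) + t) ∧
    s ^ 2 + t ^ 2 + 2 * s * t * Real.cosh (dH a b) = 1 := by
  have mab : md a b = - Real.cosh (dH a b) := by linarith [cosh_dH ha hb]
  have h1 : md z a = s * md a a + t * md b a := md_comb h a
  rw [md_self ha, md_comm b a, mab] at h1
  have h2 : md z b = s * md a b + t * md b b := md_comb h b
  rw [md_self hb, mab] at h2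
  have h3 : md z z = s * md a z + t * md b z := md_comb h z
  rw [md_self hz, md_comm a z, md_comm b z, h1, h2] at h3
  refine ⟨by rw [md_comm a z, h1]; ring, by rw [md_comm b z, h2]; ring, by linear_combination h3⟩

lemma cosh_vals {z a b : ℂ} {s t : ℝ} (ha : inDisk a) (hb : inDisk b) (hz : inDisk z)
    (h : comb z s a t b) :
    Real.cosh (dH a z) = s + t * Real.cosh (dH a b) ∧
    Real.cosh (dH b z) = s * Real.cosh (dH a b) + t := by
  obtain ⟨h1, h2, _⟩ := md_vals ha hb hz h
  constructor
  · rw [cosh_dH ha hz, h1]; ring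
  · rw [cosh_dH hb hz, h2]; ring

lemma onLine_of_comb {a b z : ℂ} (ha : inDisk a) (hb : inDisk b) (hz : inDisk z)
    {s t : ℝ} (h : comb z s a t b) : onLine a b z := by
  set c := Real.cosh (dH a b) with hc
  obtain ⟨e1, e2⟩ := cosh_vals ha hb hz h
  obtain ⟨_, _, norm1⟩ := md_vals ha hb hz h
  have hc1 : 1 ≤ c := Real.one_le_cosh _
  have sab : 0 ≤ Real.sinh (dH a b) := Real.sinh_nonneg_iff.mpr (dH_nonneg ha hb)
  have sabsq : Real.sinh (dH a b) ^ 2 = c ^ 2 - 1 := by rw [Real.sinh_sq]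
  have saz : 0 ≤ Real.sinh (dH a z) := Real.sinh_nonneg_iff.mpr (dH_nonneg ha hz)
  have sbz : 0 ≤ Real.sinh (dH b z) := Real.sinh_nonneg_iff.mpr (dH_nonneg hb hz)
  have sazsq : Real.sinh (dH a z) ^ 2 = t ^ 2 * (c ^ 2 - 1) := by
    rw [Real.sinh_sq, e1]; linear_combination norm1
  have sbzsq : Real.sinh (dH b z) ^ 2 = s ^ 2 * (c ^ 2 - 1) := by
    rw [Real.sinh_sq, e2]; linear_combination norm1
  rcases lt_or_ge s 0 with hs | hs
  · -- onSeg a b z : dH a b + dH b z = dH a z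
    have ht : 0 < t := by
      by_contra ht
      push_neg at ht
      have h1 := h.1
      nlinarith [uT_pos ha, uT_pos hb, uT_pos hz]
    have hsz : Real.sinh (dH b z) = (-s) * Real.sinh (dH a b) := by
      apply sqeq sbz (mul_nonneg (by linarith) sab)
      rw [sbzsq]; linear_combination (-(s^2)) * sabsq
    have key : Real.cosh (dH a b + dH b z) = Real.cosh (dH a z) := by
      rw [Real.cosh_add, e2, e1, hsz]
      linear_combination (-s) * sabsq
    have heq := cosh_inj (add_nonneg (dH_nonneg ha hb) (dH_nonneg hb hz)) (dH_nonneg ha hz) key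
    right; left; exact heq
  · rcases lt_or_ge t 0 with ht | ht
    · -- onSeg z a b : dH z a + dH a b = dH z b
      have hsz : Real.sinh (dH a z) = (-t) * Real.sinh (dH a b) := by
        apply sqeq saz (mul_nonneg (by linarith) sab)
        rw [sazsq]; linear_combination (-(t^2)) * sabsq
      have key : Real.cosh (dH a b + dH a z) = Real.cosh (dH b z) := by
        rw [Real.cosh_add, e2, e1, hsz]
        linear_combination (-t) * sabsq
      have heq := cosh_inj (add_nonneg (dH_nonneg ha hb) (dH_nonneg ha hz)) (dH_nonneg hb hz) key
      right; right
      show dH z a + dH a b = dH z b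
      rw [dH_comm z a, dH_comm z b]; linarith
    · -- onSeg a z b
      have h1 : Real.sinh (dH a z) = t * Real.sinh (dH a b) := by
        apply sqeq saz (mul_nonneg ht sab)
        rw [sazsq]; linear_combination (-(t^2)) * sabsq
      have h2 : Real.sinh (dH b z) = s * Real.sinh (dH a b) := by
        apply sqeq sbz (mul_nonneg hs sab)
        rw [sbzsq]; linear_combination (-(s^2)) * sabsq
      have key : Real.cosh (dH a z + dH b z) = Real.cosh (dH a b) := by
        rw [Real.cosh_add, e1, e2, h1, h2]
        linear_combination (s*t) * sabsq + c * norm1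
      have heq := cosh_inj (add_nonneg (dH_nonneg ha hz) (dH_nonneg hb hz)) (dH_nonneg ha hb) key
      left
      show dH a z + dH z b = dH a b
      rw [dH_comm z b]; linarith


/-- From the degenerate Gram relation, `z` is a linear combination of `a` and `b`. -/
lemma comb_of_G {a b z : ℂ} (ha : inDisk a) (hb : inDisk b) (hz : inDisk z) (hne : a ≠ b)
    (hG : Real.cosh (dH a b) ^ 2 + Real.cosh (dH a z) ^ 2 + Real.cosh (dH b z) ^ 2
      = 2 * Real.cosh (dH a b) * Real.cosh (dH a z) * Real.cosh (dH b z) + 1) :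
    ∃ s t : ℝ,
      s * (1 - Real.cosh (dH a b) ^ 2) = Real.cosh (dH a z) - Real.cosh (dH a b) * Real.cosh (dH b z) ∧
      t * (1 - Real.cosh (dH a b) ^ 2) = Real.cosh (dH b z) - Real.cosh (dH a b) * Real.cosh (dH a z) ∧
      comb z s a t b := by
  set c := Real.cosh (dH a b) with hcdef
  set p := Real.cosh (dH a z) with hpdef
  set q := Real.cosh (dH b z) with hqdef
  clear_value c p q
  have hc1 : 1 < c := by rw [hcdef]; exact one_lt_cosh_of_pos (dH_pos ha hb hne)
  have hden : 1 - c ^ 2 ≠ 0 := by nlinarith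
  refine ⟨(p - c * q) / (1 - c ^ 2), (q - c * p) / (1 - c ^ 2), by field_simp, by field_simp, ?_⟩
  set s := (p - c * q) / (1 - c ^ 2) with hsdef
  set t := (q - c * p) / (1 - c ^ 2) with htdef
  clear_value s t
  have f1 : s + t * c = p := by rw [hsdef, htdef]; field_simp; ring
  have f2 : s * c + t = q := by rw [hsdef, htdef]; field_simp; ring
  have f3 : s * p + t * q = 1 := by
    rw [hsdef, htdef]; field_simp; linear_combination hG
  have mab : md a b = -c := by rw [hcdef]; linarith [cosh_dH ha hb]
  have maz : md a z = -p := by rw [hpdef]; linarith [cosh_dH ha hz]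
  have mbz : md b z = -q := by rw [hqdef]; linarith [cosh_dH hb hz]
  set wT := s * uT a + t * uT b - uT z with hwT
  set wX := s * uX a + t * uX b - uX z with hwX
  set wY := s * uY a + t * uY b - uY z with hwY
  clear_value wT wX wY
  have o1 : wX * uX a + wY * uY a - wT * uT a = 0 := by
    have expand : wX * uX a + wY * uY a - wT * uT a
        = s * md a a + t * md b a - md z a := by
      rw [hwX, hwY, hwT]; unfold md; ring
    rw [expand, md_self ha, md_comm b a, mab, md_comm z a, maz]
    linear_combination -f1
  have o2 : wX * uX b + wY * uY b - wT * uT b = 0 := by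
    have expand : wX * uX b + wY * uY b - wT * uT b
        = s * md a b + t * md b b - md z b := by
      rw [hwX, hwY, hwT]; unfold md; ring
    rw [expand, md_self hb, mab, md_comm z b, mbz]
    linear_combination -f2
  have o3 : wX ^ 2 + wY ^ 2 - wT ^ 2 = 0 := by
    have expand : wX ^ 2 + wY ^ 2 - wT ^ 2
        = s ^ 2 * md a a + t ^ 2 * md b b + md z z + 2 * s * t * md a b
          - 2 * s * md a z - 2 * t * md b z := by
      rw [hwX, hwY, hwT]; unfold md; ring
    rw [expand, md_self ha, md_self hb, md_self hz, mab, maz, mbz]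
    linear_combination (-s) * f1 + (-t) * f2 + f3
  have hma : uX a ^ 2 + uY a ^ 2 - uT a ^ 2 = -1 := by
    have := md_self ha; unfold md at this; linear_combination this
  have o1' : wX * uX a + wY * uY a = wT * uT a := by linarith
  have o1sq : (wX * uX a + wY * uY a) ^ 2 = wT ^ 2 * uT a ^ 2 := by rw [o1']; ring
  have lagrange : (wX * uX a + wY * uY a) ^ 2 + (wX * uY a - wY * uX a) ^ 2
      = (wX ^ 2 + wY ^ 2) * (uX a ^ 2 + uY a ^ 2) := by ring
  have prod : (wX ^ 2 + wY ^ 2) * (uX a ^ 2 + uY a ^ 2) = wT ^ 2 * (uT a ^ 2 - 1) := by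
    have h1 : wX ^ 2 + wY ^ 2 = wT ^ 2 := by linarith
    have h2 : uX a ^ 2 + uY a ^ 2 = uT a ^ 2 - 1 := by linarith
    rw [h1, h2]
  have hwT0 : wT = 0 := by
    have hsq : wT ^ 2 ≤ 0 := by
      nlinarith [sq_nonneg (wX * uY a - wY * uX a)]
    have h0 : wT ^ 2 = 0 := le_antisymm hsq (sq_nonneg wT)
    exact sq_eq_zero_iff.mp h0
  have hxy : wX ^ 2 + wY ^ 2 = 0 := by rw [hwT0] at o3; linarith [o3]
  have hwX0 : wX = 0 := by nlinarith [sq_nonneg wX, sq_nonneg wY]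
  have hwY0 : wY = 0 := by nlinarith [sq_nonneg wX, sq_nonneg wY]
  refine ⟨?_, ?_, ?_⟩
  · have h5 := hwT; rw [hwT0] at h5; linarith [h5]
  · have h5 := hwX; rw [hwX0] at h5; linarith [h5]
  · have h5 := hwY; rw [hwY0] at h5; linarith [h5]


/-- Strict betweenness gives a positive combination. -/
lemma comb_of_sbtw {a b z : ℂ} (ha : inDisk a) (hb : inDisk b) (hz : inDisk z)
    (hne : a ≠ b) (hseg : onSeg a z b) (hza : z ≠ a) (hzb : z ≠ b) :
    ∃ s t : ℝ, 0 < s ∧ 0 < t ∧ comb z s a t b := by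
  have hseg' : dH a z + dH z b = dH a b := hseg
  have hG : Real.cosh (dH a b) ^ 2 + Real.cosh (dH a z) ^ 2 + Real.cosh (dH b z) ^ 2
      = 2 * Real.cosh (dH a b) * Real.cosh (dH a z) * Real.cosh (dH b z) + 1 := by
    have e : Real.cosh (dH a b) = Real.cosh (dH a z) * Real.cosh (dH z b)
        + Real.sinh (dH a z) * Real.sinh (dH z b) := by
      rw [← Real.cosh_add, hseg']
    have s1 : Real.sinh (dH a z) ^ 2 = Real.cosh (dH a z) ^ 2 - 1 := Real.sinh_sq _
    have s2 : Real.sinh (dH z b) ^ 2 = Real.cosh (dH z b) ^ 2 - 1 := Real.sinh_sq _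
    have key : (Real.cosh (dH a b) - Real.cosh (dH a z) * Real.cosh (dH z b)) ^ 2
        = (Real.cosh (dH a z) ^ 2 - 1) * (Real.cosh (dH z b) ^ 2 - 1) := by
      rw [← s1, ← s2, e]; ring
    rw [dH_comm b z]
    linear_combination key
  obtain ⟨s, t, hs, ht, hcomb⟩ := comb_of_G ha hb hz hne hG
  refine ⟨s, t, ?_, ?_, hcomb⟩
  · -- s > 0
    have hc1 : 1 < Real.cosh (dH a b) := one_lt_cosh_of_pos (dH_pos ha hb hne)
    have hdaz : dH a z = dH a b - dH z b := by linarith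
    have hp : Real.cosh (dH a z)
        = Real.cosh (dH a b) * Real.cosh (dH z b) - Real.sinh (dH a b) * Real.sinh (dH z b) := by
      rw [hdaz, Real.cosh_sub]
    have hsab : 0 < Real.sinh (dH a b) := Real.sinh_pos_iff.mpr (dH_pos ha hb hne)
    have hszb : 0 < Real.sinh (dH z b) := Real.sinh_pos_iff.mpr (dH_pos hz hb hzb)
    have hnum : Real.cosh (dH a z) - Real.cosh (dH a b) * Real.cosh (dH b z) < 0 := by
      rw [dH_comm b z, hp]; nlinarith
    have hK : 1 - Real.cosh (dH a b) ^ 2 < 0 := by nlinarith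
    nlinarith [hs, hnum, hK]
  · have hc1 : 1 < Real.cosh (dH a b) := one_lt_cosh_of_pos (dH_pos ha hb hne)
    have hdzb : dH z b = dH a b - dH a z := by linarith
    have hq : Real.cosh (dH z b)
        = Real.cosh (dH a b) * Real.cosh (dH a z) - Real.sinh (dH a b) * Real.sinh (dH a z) := by
      rw [hdzb, Real.cosh_sub]
    have hsab : 0 < Real.sinh (dH a b) := Real.sinh_pos_iff.mpr (dH_pos ha hb hne)
    have hsaz : 0 < Real.sinh (dH a z) := Real.sinh_pos_iff.mpr (dH_pos ha hz hza.symm)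
    have hnum : Real.cosh (dH b z) - Real.cosh (dH a b) * Real.cosh (dH a z) < 0 := by
      rw [dH_comm b z, hq]; nlinarith
    have hK : 1 - Real.cosh (dH a b) ^ 2 < 0 := by nlinarith
    nlinarith [ht, hnum, hK]

noncomputable def det3 (a b z : ℂ) : ℝ :=
  uT a * (uX b * uY z - uY b * uX z) - uX a * (uT b * uY z - uY b * uT z)
    + uY a * (uT b * uX z - uX b * uT z)

lemma det3_eq_zero {a b z : ℂ} {wt wx wy : ℝ} (hw : ¬ (wt = 0 ∧ wx = 0 ∧ wy = 0))
    (h1 : uX a * wx + uY a * wy - uT a * wt = 0)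
    (h2 : uX b * wx + uY b * wy - uT b * wt = 0)
    (h3 : uX z * wx + uY z * wy - uT z * wt = 0) : det3 a b z = 0 := by
  have i1 : det3 a b z * wt = 0 := by
    unfold det3
    linear_combination (-(uX b * uY z - uY b * uX z)) * h1
      + (-(uX z * uY a - uY z * uX a)) * h2 + (-(uX a * uY b - uY a * uX b)) * h3
  have i2 : det3 a b z * wx = 0 := by
    unfold det3
    linear_combination (uY b * uT z - uT b * uY z) * h1
      + (uY z * uT a - uT z * uY a) * h2 + (uY a * uT b - uT a * uY b) * h3
  have i3 : det3 a b z * wy = 0 := by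
    unfold det3
    linear_combination (uT b * uX z - uX b * uT z) * h1
      + (uT z * uX a - uX z * uT a) * h2 + (uT a * uX b - uX a * uT b) * h3
  by_contra hd
  exact hw ⟨by rcases mul_eq_zero.mp i1 with h | h; exact absurd h hd; exact h,
    by rcases mul_eq_zero.mp i2 with h | h; exact absurd h hd; exact h,
    by rcases mul_eq_zero.mp i3 with h | h; exact absurd h hd; exact h⟩

lemma det3_sq {a b z : ℂ} (ha : inDisk a) (hb : inDisk b) (hz : inDisk z) :
    det3 a b z ^ 2 = 1 - md a b ^ 2 - md a z ^ 2 - md b z ^ 2 - 2 * md a b * md a z * md b z := by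
  have key : det3 a b z ^ 2
      = -(md a a * (md b b * md z z - md b z ^ 2) - md a b * (md a b * md z z - md b z * md a z)
          + md a z * (md a b * md b z - md b b * md a z)) := by
    unfold det3 md; ring
  rw [key, md_self ha, md_self hb, md_self hz]; ring

lemma tanh_mul (u v : ℝ) : Real.tanh u * Real.tanh v
    = (Real.cosh (u + v) - Real.cosh (v - u)) / (Real.cosh (u + v) + Real.cosh (v - u)) := by
  have c1 := Real.cosh_pos u
  have c2 := Real.cosh_pos v
  have hpos : 0 < Real.cosh (u + v) + Real.cosh (v - u) := by
    have := Real.cosh_pos (u + v); have := Real.cosh_pos (v - u); linarith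
  rw [Real.cosh_add, Real.cosh_sub, Real.tanh_eq_sinh_div_cosh, Real.tanh_eq_sinh_div_cosh]
  rw [div_mul_div_comm, div_eq_div_iff (by positivity) (by nlinarith)]
  ring

lemma hPow_eq (a o : ℂ) (r : ℝ) :
    hPow a o r = (Real.cosh (dH a o) - Real.cosh r) / (Real.cosh (dH a o) + Real.cosh r) := by
  unfold hPow
  rw [tanh_mul]
  have e1 : (dH a o - r) / 2 + (dH a o + r) / 2 = dH a o := by ring
  have e2 : (dH a o + r) / 2 - (dH a o - r) / 2 = r := by ring
  rw [e1, e2]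

lemma point_of_vec (pT pX pY : ℝ) (hT : 0 < pT) (hpos : 0 < pT ^ 2 - pX ^ 2 - pY ^ 2) :
    ∃ P : ℂ, inDisk P ∧ ∃ qq : ℝ, 0 < qq ∧
      uT P * qq = pT ∧ uX P * qq = pX ∧ uY P * qq = pY := by
  set q := Real.sqrt (pT ^ 2 - pX ^ 2 - pY ^ 2) with hqdef
  have hq : 0 < q := Real.sqrt_pos.mpr hpos
  have hq2 : q ^ 2 = pT ^ 2 - pX ^ 2 - pY ^ 2 := Real.sq_sqrt hpos.le
  clear_value q
  have hd : 0 < pT + q := by linarith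
  have hn : Complex.normSq ⟨pX / (pT + q), pY / (pT + q)⟩ = (pX ^ 2 + pY ^ 2) / (pT + q) ^ 2 := by
    rw [Complex.normSq_mk]; field_simp
  have hnlt : (pX ^ 2 + pY ^ 2) / (pT + q) ^ 2 < 1 := by
    rw [div_lt_one (by positivity)]
    nlinarith
  have hden : 1 - (pX ^ 2 + pY ^ 2) / (pT + q) ^ 2 = 2 * q / (pT + q) := by
    field_simp
    linear_combination (-1) * hq2
  refine ⟨⟨pX / (pT + q), pY / (pT + q)⟩, ?_, q, hq, ?_, ?_, ?_⟩
  · show ‖_‖ < 1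
    rw [Complex.norm_def, hn]
    have h1 : Real.sqrt ((pX ^ 2 + pY ^ 2) / (pT + q) ^ 2) < Real.sqrt 1 :=
      Real.sqrt_lt_sqrt (by positivity) hnlt
    simpa using h1
  · show (1 + Complex.normSq _) / (1 - Complex.normSq _) * q = pT
    rw [hn, hden]
    field_simp
    linear_combination hq2
  · show 2 * (Complex.mk (pX / (pT + q)) (pY / (pT + q))).re / (1 - Complex.normSq _) * q = pX
    rw [hn, hden]
    show 2 * (pX / (pT + q)) / (2 * q / (pT + q)) * q = pX
    field_simp
  · show 2 * (Complex.mk (pX / (pT + q)) (pY / (pT + q))).im / (1 - Complex.normSq _) * q = pY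
    rw [hn, hden]
    show 2 * (pY / (pT + q)) / (2 * q / (pT + q)) * q = pY
    field_simp


end PAaux

open PAaux in
/-- The three pseudoaltitudes of a hyperbolic triangle are concurrent, meeting
at the radical center of the circles through `A,B,Ha,Hb`, through `A,C,Ha,Hc`
and through `B,C,Hb,Hc`. -/
theorem pseudoaltitudes_concurrent (A B C Ha Hb Hc o₁ o₂ o₃ : ℂ) (r₁ r₂ r₃ : ℝ)
    (hA : inDisk A) (hB : inDisk B) (hC : inDisk C)
    (htri : ¬ onLine B C A)
    (hHa : sbtwH B Ha C) (hHb : sbtwH C Hb A) (hHc : sbtwH A Hc B)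
    (haltA : hSigma B Ha A = hSigma A Ha C)
    (haltB : hSigma C Hb B = hSigma B Hb A)
    (haltC : hSigma A Hc C = hSigma C Hc B)
    (hr₁ : 0 < r₁) (hr₂ : 0 < r₂) (hr₃ : 0 < r₃)
    (hc₁ : dH o₁ A = r₁ ∧ dH o₁ B = r₁ ∧ dH o₁ Ha = r₁ ∧ dH o₁ Hb = r₁)
    (hc₂ : dH o₂ A = r₂ ∧ dH o₂ C = r₂ ∧ dH o₂ Ha = r₂ ∧ dH o₂ Hc = r₂)
    (hc₃ : dH o₃ B = r₃ ∧ dH o₃ C = r₃ ∧ dH o₃ Hb = r₃ ∧ dH o₃ Hc = r₃) :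
    ∃ P : ℂ, inDisk P ∧ onLine A Ha P ∧ onLine B Hb P ∧ onLine C Hc P ∧
      hPow P o₁ r₁ = hPow P o₂ r₂ ∧ hPow P o₂ r₂ = hPow P o₃ r₃ := by
  -- distinctness of the vertices
  have hAB : A ≠ B := by
    intro h
    exact htri (Or.inr (Or.inr (show dH A B + dH B C = dH A C by
      rw [h, dH_self]; ring)))
  have hBC : B ≠ C := by
    intro h
    exact htri (Or.inr (Or.inl (show dH B C + dH C A = dH B A by
      rw [← h, dH_self, h]; ring)))
  have hAC : A ≠ C := by
    intro h
    exact htri (Or.inl (show dH B A + dH A C = dH B C by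
      rw [h, dH_self]; ring))
  -- the feet and centers are in the disk
  have hHaD : inDisk Ha := by
    by_contra hn
    have h1 : dH B Ha ≤ 0 := dH_nonpos_outside hB hn
    have h2 : dH Ha C ≤ 0 := by rw [dH_comm]; exact dH_nonpos_outside hC hn
    have h3 : 0 < dH B C := dH_pos hB hC hBC
    have h4 := hHa.1
    exact absurd h4 (by unfold onSeg at *; linarith)
  have hHbD : inDisk Hb := by
    by_contra hn
    have h1 : dH C Hb ≤ 0 := dH_nonpos_outside hC hn
    have h2 : dH Hb A ≤ 0 := by rw [dH_comm]; exact dH_nonpos_outside hA hn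
    have h3 : 0 < dH C A := dH_pos hC hA (Ne.symm hAC)
    have h4 := hHb.1
    exact absurd h4 (by unfold onSeg at *; linarith)
  have hHcD : inDisk Hc := by
    by_contra hn
    have h1 : dH A Hc ≤ 0 := dH_nonpos_outside hA hn
    have h2 : dH Hc B ≤ 0 := by rw [dH_comm]; exact dH_nonpos_outside hB hn
    have h3 : 0 < dH A B := dH_pos hA hB hAB
    have h4 := hHc.1
    exact absurd h4 (by unfold onSeg at *; linarith)
  have ho1 : inDisk o₁ := by
    by_contra hn
    have h1 : dH o₁ A ≤ 0 := by rw [dH_comm]; exact dH_nonpos_outside hA hn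
    rw [hc₁.1] at h1; linarith
  have ho2 : inDisk o₂ := by
    by_contra hn
    have h1 : dH o₂ A ≤ 0 := by rw [dH_comm]; exact dH_nonpos_outside hA hn
    rw [hc₂.1] at h1; linarith
  have ho3 : inDisk o₃ := by
    by_contra hn
    have h1 : dH o₃ B ≤ 0 := by rw [dH_comm]; exact dH_nonpos_outside hB hn
    rw [hc₃.1] at h1; linarith
  have hCHc : C ≠ Hc := by
    intro h
    refine htri (Or.inr (Or.inl (show dH B C + dH C A = dH B A by
      have h4 : dH A Hc + dH Hc B = dH A B := hHc.1
      rw [← h] at h4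
      rw [dH_comm B C, dH_comm C A, dH_comm B A]; linarith)))
  -- positive combinations for the feet
  obtain ⟨β, γ, hβ, hγ, combHa⟩ := comb_of_sbtw hB hC hHaD hBC hHa.1 hHa.2.1 hHa.2.2
  obtain ⟨δ, ε, hδ, hε, combHb⟩ := comb_of_sbtw hC hA hHbD (Ne.symm hAC) hHb.1 hHb.2.1 hHb.2.2
  -- the candidate point
  have hpT : 0 < γ * ε * uT A + δ * uT Ha :=
    add_pos (mul_pos (mul_pos hγ hε) (uT_pos hA)) (mul_pos hδ (uT_pos hHaD))
  have hquad : 0 < (γ * ε * uT A + δ * uT Ha) ^ 2 - (γ * ε * uX A + δ * uX Ha) ^ 2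
      - (γ * ε * uY A + δ * uY Ha) ^ 2 := by
    have expand : (γ * ε * uT A + δ * uT Ha) ^ 2 - (γ * ε * uX A + δ * uX Ha) ^ 2
        - (γ * ε * uY A + δ * uY Ha) ^ 2
        = -((γ * ε) ^ 2 * md A A + δ ^ 2 * md Ha Ha + 2 * (γ * ε) * δ * md A Ha) := by
      unfold md; ring
    rw [expand, md_self hA, md_self hHaD]
    nlinarith only [md_le hA hHaD, mul_pos (mul_pos hγ hε) hδ, sq_nonneg (γ * ε - δ)]
  obtain ⟨P, hPD, qq, hqq, hTq, hXq, hYq⟩ := point_of_vec _ _ _ hpT hquad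
  have combPA : comb P (γ * ε / qq) A (δ / qq) Ha := by
    refine ⟨?_, ?_, ?_⟩
    · field_simp; linear_combination hTq
    · field_simp; linear_combination hXq
    · field_simp; linear_combination hYq
  have combPB : comb P (δ * β / qq) B (γ / qq) Hb := by
    refine ⟨?_, ?_, ?_⟩
    · field_simp; linear_combination hTq + δ * combHa.1 - γ * combHb.1
    · field_simp; linear_combination hXq + δ * combHa.2.1 - γ * combHb.2.1
    · field_simp; linear_combination hYq + δ * combHa.2.2 - γ * combHb.2.2
  -- md values from the circle hypotheses
  have mval : ∀ (x o : ℂ) (r : ℝ), inDisk x → inDisk o → dH o x = r → md x o = -Real.cosh r := by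
    intro x o r hx ho h
    have hh := cosh_dH hx ho
    rw [dH_comm x o, h] at hh
    linarith only [hh]
  have mAo1 := mval A o₁ r₁ hA ho1 hc₁.1
  have mBo1 := mval B o₁ r₁ hB ho1 hc₁.2.1
  have mHao1 := mval Ha o₁ r₁ hHaD ho1 hc₁.2.2.1
  have mHbo1 := mval Hb o₁ r₁ hHbD ho1 hc₁.2.2.2
  have mAo2 := mval A o₂ r₂ hA ho2 hc₂.1
  have mCo2 := mval C o₂ r₂ hC ho2 hc₂.2.1
  have mHao2 := mval Ha o₂ r₂ hHaD ho2 hc₂.2.2.1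
  have mHco2 := mval Hc o₂ r₂ hHcD ho2 hc₂.2.2.2
  have mBo3 := mval B o₃ r₃ hB ho3 hc₃.1
  have mCo3 := mval C o₃ r₃ hC ho3 hc₃.2.1
  have mHbo3 := mval Hb o₃ r₃ hHbD ho3 hc₃.2.2.1
  have mHco3 := mval Hc o₃ r₃ hHcD ho3 hc₃.2.2.2
  -- cosh distances from P to the centers
  have cP1 : Real.cosh (dH P o₁) = (γ * ε + δ) / qq * Real.cosh r₁ := by
    have h := cosh_dH hPD ho1
    rw [md_comb combPA o₁, mAo1, mHao1] at h
    rw [h]; field_simp; ring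
  have cP2 : Real.cosh (dH P o₂) = (γ * ε + δ) / qq * Real.cosh r₂ := by
    have h := cosh_dH hPD ho2
    rw [md_comb combPA o₂, mAo2, mHao2] at h
    rw [h]; field_simp; ring
  have cP1' : Real.cosh (dH P o₁) = (δ * β + γ) / qq * Real.cosh r₁ := by
    have h := cosh_dH hPD ho1
    rw [md_comb combPB o₁, mBo1, mHbo1] at h
    rw [h]; field_simp; ring
  have cP3 : Real.cosh (dH P o₃) = (δ * β + γ) / qq * Real.cosh r₃ := by
    have h := cosh_dH hPD ho3
    rw [md_comb combPB o₃, mBo3, mHbo3] at h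
    rw [h]; field_simp; ring
  have hkk : (δ * β + γ) / qq = (γ * ε + δ) / qq :=
    mul_right_cancel₀ (Real.cosh_pos r₁).ne' (cP1'.symm.trans cP1)
  rw [hkk] at cP1' cP3
  have hkpos : 0 < (γ * ε + δ) / qq := div_pos (by positivity) hqq
  -- the common power value
  have hpow : ∀ (o : ℂ) (r : ℝ), Real.cosh (dH P o) = (γ * ε + δ) / qq * Real.cosh r →
      hPow P o r = ((γ * ε + δ) / qq - 1) / ((γ * ε + δ) / qq + 1) := by
    intro o r h
    rw [hPow_eq, h]
    have hc := Real.cosh_pos r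
    have h1 : 0 < (γ * ε + δ) / qq * Real.cosh r := mul_pos hkpos hc
    rw [div_eq_div_iff (by linarith only [h1, hc]) (by linarith only [hkpos])]
    ring
  have pow1 := hpow o₁ r₁ cP1
  have pow2 := hpow o₂ r₂ cP2
  have pow3 := hpow o₃ r₃ cP3
  -- the third line
  have mPo2 : md P o₂ = -((γ * ε + δ) / qq * Real.cosh r₂) := by
    have h := cosh_dH hPD ho2; linarith only [h, cP2]
  have mPo3 : md P o₃ = -((γ * ε + δ) / qq * Real.cosh r₃) := by
    have h := cosh_dH hPD ho3; linarith only [h, cP3]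
  have hch2 := (Real.cosh_pos r₂).ne'
  have hch3 := (Real.cosh_pos r₃).ne'
  have honC : onLine C Hc P := by
    have E : ∀ x : ℂ, md x o₂ = -Real.cosh r₂ → md x o₃ = -Real.cosh r₃ →
        uX x * (uX o₂ / Real.cosh r₂ - uX o₃ / Real.cosh r₃)
        + uY x * (uY o₂ / Real.cosh r₂ - uY o₃ / Real.cosh r₃)
        - uT x * (uT o₂ / Real.cosh r₂ - uT o₃ / Real.cosh r₃) = 0 := by
      intro x h2 h3
      have expand : uX x * (uX o₂ / Real.cosh r₂ - uX o₃ / Real.cosh r₃)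
          + uY x * (uY o₂ / Real.cosh r₂ - uY o₃ / Real.cosh r₃)
          - uT x * (uT o₂ / Real.cosh r₂ - uT o₃ / Real.cosh r₃)
          = md x o₂ / Real.cosh r₂ - md x o₃ / Real.cosh r₃ := by
        unfold md; ring
      rw [expand, h2, h3]
      field_simp
      ring
    have EP : uX P * (uX o₂ / Real.cosh r₂ - uX o₃ / Real.cosh r₃)
        + uY P * (uY o₂ / Real.cosh r₂ - uY o₃ / Real.cosh r₃)
        - uT P * (uT o₂ / Real.cosh r₂ - uT o₃ / Real.cosh r₃) = 0 := by
      have expand : uX P * (uX o₂ / Real.cosh r₂ - uX o₃ / Real.cosh r₃)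
          + uY P * (uY o₂ / Real.cosh r₂ - uY o₃ / Real.cosh r₃)
          - uT P * (uT o₂ / Real.cosh r₂ - uT o₃ / Real.cosh r₃)
          = md P o₂ / Real.cosh r₂ - md P o₃ / Real.cosh r₃ := by
        unfold md; ring
      rw [expand, mPo2, mPo3]
      field_simp
      ring
    by_cases hw : uT o₂ / Real.cosh r₂ - uT o₃ / Real.cosh r₃ = 0
        ∧ uX o₂ / Real.cosh r₂ - uX o₃ / Real.cosh r₃ = 0
        ∧ uY o₂ / Real.cosh r₂ - uY o₃ / Real.cosh r₃ = 0
    · exfalso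
      obtain ⟨e1, e2, e3⟩ := hw
      have f1 : uT o₂ = Real.cosh r₂ / Real.cosh r₃ * uT o₃ := by
        field_simp at e1 ⊢; linarith only [e1]
      have f2 : uX o₂ = Real.cosh r₂ / Real.cosh r₃ * uX o₃ := by
        field_simp at e2 ⊢; linarith only [e2]
      have f3 : uY o₂ = Real.cosh r₂ / Real.cosh r₃ * uY o₃ := by
        field_simp at e3 ⊢; linarith only [e3]
      have hmd2 : md o₂ o₂ = (Real.cosh r₂ / Real.cosh r₃) ^ 2 * md o₃ o₃ := by
        unfold md
        rw [f1, f2, f3]; ring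
      rw [md_self ho2, md_self ho3] at hmd2
      have hρsq : (Real.cosh r₂ / Real.cosh r₃) ^ 2 = 1 := by linarith only [hmd2]
      have hρpos : 0 < Real.cosh r₂ / Real.cosh r₃ :=
        div_pos (Real.cosh_pos r₂) (Real.cosh_pos r₃)
      have hρ1 : Real.cosh r₂ / Real.cosh r₃ = 1 := by
        have hfact : (Real.cosh r₂ / Real.cosh r₃ - 1) * (Real.cosh r₂ / Real.cosh r₃ + 1) = 0 := by
          linear_combination hρsq
        rcases mul_eq_zero.mp hfact with h | h
        · linarith only [h]
        · linarith only [h, hρpos]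
      rw [hρ1, one_mul] at f1 f2 f3
      have hch : Real.cosh r₂ = Real.cosh r₃ := by
        rw [div_eq_one_iff_eq hch3] at hρ1; exact hρ1
      have hBo2 : md B o₂ = -Real.cosh r₃ := by
        have : md B o₂ = md B o₃ := by unfold md; rw [f1, f2, f3]
        rw [this, mBo3]
      have hCo2 : md C o₂ = -Real.cosh r₃ := by
        have : md C o₂ = md C o₃ := by unfold md; rw [f1, f2, f3]
        rw [this, mCo3]
      have hmd := md_comb combHa o₂
      rw [mHao2, hBo2, hCo2, hch] at hmd
      have hnorm := (md_vals hB hC hHaD combHa).2.2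
      have hcsh : 1 < Real.cosh (dH B C) := one_lt_cosh_of_pos (dH_pos hB hC hBC)
      have hsum : β + γ < 1 := by nlinarith only [hnorm, hcsh, hβ, hγ, mul_pos hβ hγ]
      nlinarith only [hmd, hsum, Real.cosh_pos r₃]
    · have hdet : det3 C Hc P = 0 :=
        det3_eq_zero hw (E C mCo2 mCo3) (E Hc mHco2 mHco3) EP
      have hsq := det3_sq hC hHcD hPD
      rw [hdet] at hsq
      have m1 : md C Hc = -Real.cosh (dH C Hc) := by linarith only [cosh_dH hC hHcD]
      have m2 : md C P = -Real.cosh (dH C P) := by linarith only [cosh_dH hC hPD]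
      have m3 : md Hc P = -Real.cosh (dH Hc P) := by linarith only [cosh_dH hHcD hPD]
      rw [m1, m2, m3] at hsq
      have hG : Real.cosh (dH C Hc) ^ 2 + Real.cosh (dH C P) ^ 2 + Real.cosh (dH Hc P) ^ 2
          = 2 * Real.cosh (dH C Hc) * Real.cosh (dH C P) * Real.cosh (dH Hc P) + 1 := by
        linear_combination hsq
      obtain ⟨s, t, _, _, combPC⟩ := comb_of_G hC hHcD hPD hCHc hG
      exact onLine_of_comb hC hHcD hPD combPC
  exact ⟨P, hPD, onLine_of_comb hA hHaD hPD combPA, onLine_of_comb hB hHbD hPD combPB,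
    honC, pow1.trans pow2.symm, pow2.trans pow3.symm⟩
end
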